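/- Let T = Σ_{j=1}^{N} (L_j + L_j*) be the generating operator. Then for every natural number k, the even moments of T in the vacuum state are ⟨T^{2k} δ_e, δ_e⟩ = catalan(k) · N^k, where catalan(k) is the k-th Catalan number. (Consequently, the generating operator T₀ = x₁ + … + x_N of the free group factor L(F_N), where x₁, …, x_N are free standard semicircular generators, has 2k-th moment catalan(k)·N^k.) -/

import Mathlib

noncomputable section

/-- The Hilbert space `ℓ²(FreeMonoid (Fin N), ℂ)`. -/
abbrev FMH (N : ℕ) : Type := lp (fun _ : FreeMonoid (Fin N) => ℂ) 2

/-- The standard orthonormal basis vector `δ_w` at the word `w`. -/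
noncomputable def delta (N : ℕ) (w : FreeMonoid (Fin N)) : FMH N :=
  letI : DecidableEq (FreeMonoid (Fin N)) := Classical.decEq _
  lp.single 2 w 1

namespace GenOpMomentsAux

open scoped Classical

/-- Weighted counts of nonnegative lattice walks. -/
def dd (N : ℕ) : ℕ → ℕ → ℕ
  | 0, 0 => 1
  | 0, _+1 => 0
  | n+1, 0 => N * dd N n 1
  | n+1, m+1 => dd N n m + N * dd N n (m+2)

lemma dd_closed (N : ℕ) : ∀ n m : ℕ, (dd N n m : ℤ) =
    if m ≤ n ∧ (n + m) % 2 = 0 then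
      (N:ℤ)^((n-m)/2) * ((n.choose ((n-m)/2) : ℤ) - (n.choose (n+1-(n-m)/2) : ℤ))
    else 0 := by
  intro n
  induction n with
  | zero =>
    intro m
    match m with
    | 0 => simp [dd]
    | m+1 => simp [dd]
  | succ n ih =>
    intro m
    match m with
    | 0 =>
      rw [show dd N (n+1) 0 = N * dd N n 1 from rfl]
      by_cases hpar : (n + 1) % 2 = 0
      · -- n odd, n = 2s+1
        obtain ⟨s, rfl⟩ : ∃ s, n = 2*s + 1 := ⟨n/2, by omega⟩
        push_cast [ih 1]
        split_ifs with h
        · rw [show 2*s/2 = s by omega, show (2*s+2)/2 = s+1 by omega,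
            show 2*s+1+1-s = s+2 by omega, show 2*s+1+1+1-(s+1) = s+2 by omega]
          simp only [Nat.choose_succ_succ]
          push_cast
          ring
        · ring
      · -- n even: dd N n 1 = 0
        rw [if_neg (by omega)]
        have := ih 1
        rw [if_neg (by omega)] at this
        have : dd N n 1 = 0 := by exact_mod_cast this
        simp [this]
    | m+1 =>
      rw [show dd N (n+1) (m+1) = dd N n m + N * dd N n (m+2) from rfl]
      by_cases hpar : (n + 1 + (m+1)) % 2 = 0
      · by_cases hle : m + 1 ≤ n + 1
        · by_cases hmn : m = n
          · subst hmn
            push_cast [ih m, ih (m+2)]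
            rw [if_pos ⟨le_refl _, by omega⟩, if_neg (by omega), if_pos ⟨le_refl _, hpar⟩,
              show (m-m)/2 = 0 by omega, Nat.sub_zero, Nat.sub_zero,
              Nat.choose_eq_zero_of_lt (show m < m+1 by omega),
              Nat.choose_eq_zero_of_lt (show m+1 < m+2 by omega)]
            simp
          · -- m < n, and parity forces m + 2 ≤ n
            have hm2 : m + 2 ≤ n := by omega
            obtain ⟨i, hi⟩ : ∃ i, (n - m)/2 = i + 1 := ⟨(n-m)/2 - 1, by omega⟩
            push_cast [ih m, ih (m+2)]
            rw [if_pos ⟨by omega, by omega⟩, if_pos ⟨by omega, by omega⟩,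
              if_pos ⟨by omega, hpar⟩, hi, show (n-(m+2))/2 = i by omega,
              show n+1-(i+1) = n-i by omega, show n+1-i = (n-i)+1 by omega,
              show n+1+1-(i+1) = (n-i)+1 by omega]
            simp only [Nat.choose_succ_succ]
            push_cast
            ring
        · -- m+1 > n+1
          push_cast [ih m, ih (m+2)]
          rw [if_neg (by omega), if_neg (by omega), if_neg (by omega)]
          simp
      · push_cast [ih m, ih (m+2)]
        rw [if_neg (by omega), if_neg (by omega), if_neg (by omega)]
        simp

lemma choose_sub_catalan (k : ℕ) :
    ((2*k).choose k : ℤ) - ((2*k).choose (k+1) : ℤ) = catalan k := by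
  have h1 : (k+1) * catalan k = Nat.centralBinom k := succ_mul_catalan_eq_centralBinom k
  have h2 : (2*k).choose (k+1) * (k+1) = (2*k).choose k * (2*k - k) :=
    Nat.choose_succ_right_eq (2*k) k
  have h3 : Nat.centralBinom k = (2*k).choose k := rfl
  have hk : 2*k - k = k := by omega
  rw [hk] at h2
  have : ((k:ℤ)+1) * (((2*k).choose k : ℤ) - ((2*k).choose (k+1) : ℤ)) = ((k:ℤ)+1) * catalan k := by
    have h2' : ((2*k).choose (k+1) : ℤ) * ((k:ℤ)+1) = ((2*k).choose k : ℤ) * k := by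
      exact_mod_cast congrArg (Nat.cast : ℕ → ℤ) h2
    have h1' : ((k:ℤ)+1) * (catalan k : ℤ) = ((2*k).choose k : ℤ) := by
      rw [← h3]; exact_mod_cast congrArg (Nat.cast : ℕ → ℤ) h1
    rw [h1']
    linarith
  exact mul_left_cancel₀ (by positivity) this

lemma dd_catalan (N k : ℕ) : (dd N (2*k) 0 : ℤ) = (catalan k : ℤ) * (N:ℤ)^k := by
  rw [dd_closed, if_pos ⟨Nat.zero_le _, by omega⟩]
  rw [show (2*k-0)/2 = k by omega, show 2*k+1-k = k+1 by omega, choose_sub_catalan]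
  ring

lemma delta_apply (N : ℕ) (w j : FreeMonoid (Fin N)) :
    (delta N w : FMH N) j = if j = w then 1 else 0 := by
  unfold delta
  rw [lp.single_apply]
  split_ifs <;> simp_all

lemma inner_delta_left (N : ℕ) (w : FreeMonoid (Fin N)) (f : FMH N) :
    (inner ℂ (delta N w) f : ℂ) = f w := by
  unfold delta
  rw [lp.inner_single_left]
  simp

lemma inner_delta_delta (N : ℕ) (w h : FreeMonoid (Fin N)) :
    (inner ℂ (delta N w) (delta N h) : ℂ) = if h = w then 1 else 0 := by
  rw [inner_delta_left, delta_apply]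
  split_ifs <;> simp_all

variable {N : ℕ} {L : FreeMonoid (Fin N) → (FMH N →L[ℂ] FMH N)}

lemma adjoint_apply_coord (hL : ∀ w h : FreeMonoid (Fin N), L w (delta N h) = delta N (w * h))
    (j : Fin N) (w h : FreeMonoid (Fin N)) :
    (ContinuousLinearMap.adjoint (L (.of j)) (delta N w) : FMH N) h
      = if w = FreeMonoid.of j * h then 1 else 0 := by
  rw [← inner_delta_left, ContinuousLinearMap.adjoint_inner_right, hL, inner_delta_delta]

lemma adjoint_delta_cons (hL : ∀ w h : FreeMonoid (Fin N), L w (delta N h) = delta N (w * h))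
    (j : Fin N) (a : Fin N) (t : FreeMonoid (Fin N)) :
    ContinuousLinearMap.adjoint (L (.of j)) (delta N (.of a * t))
      = if a = j then delta N t else 0 := by
  apply lp.ext
  funext h
  rw [adjoint_apply_coord hL]
  have hiff : (FreeMonoid.of a * t = FreeMonoid.of j * h) ↔ (a = j ∧ t = h) := by
    constructor
    · intro hh
      have : (FreeMonoid.of a * t).toList = (FreeMonoid.of j * h).toList := by rw [hh]
      rw [FreeMonoid.toList_of_mul, FreeMonoid.toList_of_mul] at this
      obtain ⟨h1, h2⟩ := List.cons.injEq _ _ _ _ ▸ this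
      exact ⟨h1, FreeMonoid.toList.injective h2⟩
    · rintro ⟨rfl, rfl⟩; rfl
  by_cases haj : a = j
  · subst haj
    simp [hiff, delta_apply, eq_comm]
  · rw [if_neg haj]
    have : ¬ (FreeMonoid.of a * t = FreeMonoid.of j * h) := fun hh => haj (hiff.1 hh).1
    rw [if_neg this]
    rfl

lemma adjoint_delta_one (hL : ∀ w h : FreeMonoid (Fin N), L w (delta N h) = delta N (w * h))
    (j : Fin N) :
    ContinuousLinearMap.adjoint (L (.of j)) (delta N 1) = 0 := by
  apply lp.ext
  funext h
  rw [adjoint_apply_coord hL]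
  have : (1 : FreeMonoid (Fin N)) ≠ FreeMonoid.of j * h := by
    intro hh
    have := congrArg FreeMonoid.toList hh
    rw [FreeMonoid.toList_of_mul] at this
    simp at this
  rw [if_neg this]; rfl

/-- The generating operator. -/
def T (L : FreeMonoid (Fin N) → (FMH N →L[ℂ] FMH N)) : FMH N →L[ℂ] FMH N :=
  ∑ j : Fin N, (L (FreeMonoid.of j) + ContinuousLinearMap.adjoint (L (FreeMonoid.of j)))

lemma T_selfadjoint : ContinuousLinearMap.adjoint (T L) = T L := by
  unfold T
  rw [map_sum]
  refine Finset.sum_congr rfl fun j _ => ?_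
  rw [map_add, ContinuousLinearMap.adjoint_adjoint, add_comm]

lemma T_delta_one (hL : ∀ w h : FreeMonoid (Fin N), L w (delta N h) = delta N (w * h)) :
    T L (delta N 1) = ∑ j : Fin N, delta N (.of j) := by
  unfold T
  rw [ContinuousLinearMap.sum_apply]
  refine Finset.sum_congr rfl fun j _ => ?_
  rw [ContinuousLinearMap.add_apply, hL, adjoint_delta_one hL, mul_one, add_zero]

lemma T_delta_cons (hL : ∀ w h : FreeMonoid (Fin N), L w (delta N h) = delta N (w * h))
    (a : Fin N) (t : FreeMonoid (Fin N)) :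
    T L (delta N (.of a * t))
      = (∑ j : Fin N, delta N (.of j * (.of a * t))) + delta N t := by
  unfold T
  rw [ContinuousLinearMap.sum_apply]
  have : ∀ j : Fin N,
      (L (FreeMonoid.of j) + ContinuousLinearMap.adjoint (L (FreeMonoid.of j)))
        (delta N (.of a * t))
      = delta N (.of j * (.of a * t)) + if a = j then delta N t else 0 := by
    intro j
    rw [ContinuousLinearMap.add_apply, hL, adjoint_delta_cons hL]
  rw [Finset.sum_congr rfl fun j _ => this j, Finset.sum_add_distrib]
  congr 1
  rw [Finset.sum_ite_eq Finset.univ a (fun _ => delta N t), if_pos (Finset.mem_univ a)]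

lemma coord (hL : ∀ w h : FreeMonoid (Fin N), L w (delta N h) = delta N (w * h)) :
    ∀ (n : ℕ) (w : FreeMonoid (Fin N)),
      (inner ℂ (delta N w) ((T L ^ n) (delta N 1)) : ℂ) = dd N n (w.toList.length) := by
  intro n
  induction n with
  | zero =>
    intro w
    rw [pow_zero, ContinuousLinearMap.one_apply, inner_delta_delta]
    induction w using FreeMonoid.casesOn with
    | one => simp [dd]
    | of_mul a t =>
      have : (1 : FreeMonoid (Fin N)) ≠ FreeMonoid.of a * t := by
        intro hh
        have := congrArg FreeMonoid.toList hh
        rw [FreeMonoid.toList_of_mul] at this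
        simp at this
      rw [if_neg this, FreeMonoid.toList_of_mul]
      simp [dd]
  | succ n ih =>
    intro w
    rw [pow_succ', ContinuousLinearMap.mul_apply]
    rw [show (T L) ((T L ^ n) (delta N 1))
        = ContinuousLinearMap.adjoint (T L) ((T L ^ n) (delta N 1)) by rw [T_selfadjoint],
      ContinuousLinearMap.adjoint_inner_right]
    induction w using FreeMonoid.casesOn with
    | one =>
      rw [T_delta_one hL, sum_inner]
      have : ∀ j : Fin N, (inner ℂ (delta N (.of j)) ((T L ^ n) (delta N 1)) : ℂ)
          = dd N n 1 := fun j => ih (.of j)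
      rw [Finset.sum_congr rfl fun j _ => this j, Finset.sum_const, Finset.card_univ,
        Fintype.card_fin]
      rw [nsmul_eq_mul,
        show ((1 : FreeMonoid (Fin N)).toList.length) = 0 from rfl,
        show dd N (n+1) 0 = N * dd N n 1 from rfl]
      push_cast
      ring
    | of_mul a t =>
      rw [T_delta_cons hL, inner_add_left, sum_inner]
      have h1 : ∀ j : Fin N,
          (inner ℂ (delta N (.of j * (.of a * t))) ((T L ^ n) (delta N 1)) : ℂ)
          = dd N n (t.toList.length + 2) := by
        intro j
        rw [ih (.of j * (.of a * t))]
        congr 2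
      rw [Finset.sum_congr rfl fun j _ => h1 j, Finset.sum_const, Finset.card_univ,
        Fintype.card_fin, ih t, FreeMonoid.toList_of_mul]
      rw [nsmul_eq_mul, List.length_cons,
        show dd N (n+1) (t.toList.length + 1)
          = dd N n t.toList.length + N * dd N n (t.toList.length+2) from rfl]
      push_cast
      ring

end GenOpMomentsAux

open GenOpMomentsAux in
/-- The even vacuum moments of the generating operator `T = Σ_j (L_j + L_j*)`
are `⟨T^{2k} δ_e, δ_e⟩ = catalan k · N^k`. -/
theorem generating_operator_even_moments (N : ℕ) (hN : 0 < N)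
    (L : FreeMonoid (Fin N) → (FMH N →L[ℂ] FMH N))
    (hL : ∀ w h : FreeMonoid (Fin N), L w (delta N h) = delta N (w * h))
    (k : ℕ) :
    (inner ℂ
        (((∑ j : Fin N, (L (FreeMonoid.of j) + ContinuousLinearMap.adjoint (L (FreeMonoid.of j))))
            ^ (2 * k)) (delta N 1))
        (delta N 1) : ℂ) = (catalan k : ℂ) * (N : ℂ) ^ k := by
  have hc := coord hL (2*k) 1
  have h1 : ((1 : FreeMonoid (Fin N)).toList.length) = 0 := rfl
  rw [h1] at hc
  have hT : (∑ j : Fin N,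
      (L (FreeMonoid.of j) + ContinuousLinearMap.adjoint (L (FreeMonoid.of j)))) = T L := rfl
  rw [hT]
  rw [← inner_conj_symm, hc]
  have : (dd N (2*k) 0 : ℂ) = (catalan k : ℂ) * (N : ℂ) ^ k := by
    have := dd_catalan N k
    exact_mod_cast congrArg (Int.cast : ℤ → ℂ) this
  rw [← this]
  simp
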